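/- Let P ⊆ ℝⁿ be a permutation-invariant polytope, x' ∈ P, and π a permutation with x'_{π(1)} ≥ ... ≥ x'_{π(n)}. Then there exists u' ∈ P with u' ≥_m x' and sorted(u') ≠ sorted(x') if and only if there does NOT exist a ∈ ℝⁿ with a_{π(1)} > a_{π(2)} > ... > a_{π(n)} such that the inequality Σᵢ aᵢ(xᵢ − x'ᵢ) ≤ 0 is valid for all x ∈ P. -/

import Mathlib

open Finset

/-- The `i`-th largest entry (0-indexed) of the tuple `x`. -/
noncomputable def sortedDesc (n : ℕ) (x : Fin n → ℝ) : Fin n → ℝ :=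
  fun i => x (Tuple.sort x i.rev)

/-- Sum of the `k` largest entries of `x`. -/
noncomputable def topSum (n : ℕ) (x : Fin n → ℝ) (k : ℕ) : ℝ :=
  ∑ i ∈ Finset.univ.filter (fun i : Fin n => (i : ℕ) < k), sortedDesc n x i

/-- `u` majorizes `x`. -/
def Majorizes (n : ℕ) (u x : Fin n → ℝ) : Prop :=
  (∀ k, k < n → topSum n x k ≤ topSum n u k) ∧ (∑ i, x i = ∑ i, u i)

/-- `u` weakly submajorizes `x`. -/
def WeakSubmajorizes (n : ℕ) (u x : Fin n → ℝ) : Prop :=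
  ∀ k, k ≤ n → topSum n x k ≤ topSum n u k

/-- Number of nonzero components. -/
noncomputable def suppCard (n : ℕ) (x : Fin n → ℝ) : ℕ :=
  (Finset.univ.filter (fun i => x i ≠ 0)).card

section Aux
variable {n : ℕ}

/-- partial sum of the first `m` entries of `y`. -/
noncomputable def partSum (n : ℕ) (y : Fin n → ℝ) (m : ℕ) : ℝ :=
  ∑ i ∈ Finset.univ.filter (fun i : Fin n => (i : ℕ) < m), y i

lemma topSum_eq_partSum (x : Fin n → ℝ) (k : ℕ) :
    topSum n x k = partSum n (sortedDesc n x) k := rfl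

lemma sortedDesc_eq_comp (x : Fin n → ℝ) :
    sortedDesc n x = x ∘ ⇑(Fin.revPerm.trans (Tuple.sort x)) := rfl

lemma sortedDesc_antitone (x : Fin n → ℝ) : Antitone (sortedDesc n x) := by
  intro i j hij
  exact Tuple.monotone_sort x (Fin.rev_le_rev.mpr hij)

lemma sortedDesc_comp_perm (x : Fin n → ℝ) (σ : Equiv.Perm (Fin n)) :
    sortedDesc n (x ∘ ⇑σ) = sortedDesc n x := by
  funext i
  exact congrFun (Tuple.comp_perm_comp_sort_eq_comp_sort (f := x) (σ := σ)) i.rev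

lemma sortedDesc_of_antitone (x : Fin n → ℝ) (π : Equiv.Perm (Fin n))
    (h : Antitone fun i => x (π i)) : sortedDesc n x = fun i => x (π i) := by
  have hrevanti : Antitone (fun i : Fin n => i.rev) := fun i j hij => Fin.rev_le_rev.mpr hij
  set f : Fin n → ℝ := (fun i => x (π i)) ∘ ⇑Fin.revPerm with hf
  have hfmono : Monotone f := h.comp hrevanti
  have hsf : Tuple.sort f = Equiv.refl _ := Tuple.sort_eq_refl_iff_monotone.mpr hfmono
  have hxf : f ∘ ⇑(π.symm.trans Fin.revPerm) = x := by
    funext j; simp [hf, Fin.rev_rev]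
  have key : x ∘ ⇑(Tuple.sort x) = f := by
    calc x ∘ ⇑(Tuple.sort x)
        = (f ∘ ⇑(π.symm.trans Fin.revPerm)) ∘ ⇑(Tuple.sort (f ∘ ⇑(π.symm.trans Fin.revPerm))) := by
          rw [hxf]
      _ = f ∘ ⇑(Tuple.sort f) := Tuple.comp_perm_comp_sort_eq_comp_sort (f := f) (σ := π.symm.trans Fin.revPerm)
      _ = f := by rw [hsf]; rfl
  funext i
  have := congrFun key i.rev
  simpa [sortedDesc, hf, Fin.rev_rev] using this

lemma partSum_zero (y : Fin n → ℝ) : partSum n y 0 = 0 := by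
  simp [partSum]

lemma partSum_of_le (y : Fin n → ℝ) {m : ℕ} (h : n ≤ m) : partSum n y m = ∑ i, y i := by
  unfold partSum
  congr 1
  apply Finset.filter_true_of_mem
  intro i _
  exact lt_of_lt_of_le i.isLt h

lemma partSum_succ (y : Fin n → ℝ) {m : ℕ} (h : m < n) :
    partSum n y (m + 1) = partSum n y m + y ⟨m, h⟩ := by
  unfold partSum
  rw [show Finset.univ.filter (fun i : Fin n => (i : ℕ) < m + 1)
      = insert (⟨m, h⟩ : Fin n) (Finset.univ.filter (fun i : Fin n => (i : ℕ) < m)) by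
    ext i
    simp only [Finset.mem_insert, Finset.mem_filter, Finset.mem_univ, true_and]
    constructor
    · intro hi
      rcases Nat.lt_succ_iff_lt_or_eq.mp hi with h1 | h1
      · exact Or.inr h1
      · exact Or.inl (Fin.ext h1)
    · rintro (rfl | h1)
      · exact Nat.lt_succ_self m
      · exact Nat.lt_succ_of_lt h1]
  rw [Finset.sum_insert (by simp)]
  ring

lemma filter_lt_eq_map {m : ℕ} (h : m ≤ n) :
    Finset.univ.filter (fun i : Fin n => (i : ℕ) < m)
      = (Finset.univ : Finset (Fin m)).map (Fin.castLEEmb h) := by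
  ext i
  constructor
  · intro hi
    simp only [Finset.mem_filter, Finset.mem_univ, true_and] at hi
    exact Finset.mem_map.mpr ⟨⟨(i : ℕ), hi⟩, Finset.mem_univ _, rfl⟩
  · intro hi
    obtain ⟨j, -, rfl⟩ := Finset.mem_map.mp hi
    simp only [Finset.mem_filter, Finset.mem_univ, true_and]
    exact j.isLt

lemma partSum_eq_sum_fin (y : Fin n → ℝ) {m : ℕ} (h : m ≤ n) :
    partSum n y m = ∑ j : Fin m, y (Fin.castLE h j) := by
  unfold partSum
  rw [filter_lt_eq_map h, Finset.sum_map]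
  rfl

lemma card_filter_lt {m : ℕ} (h : m ≤ n) :
    (Finset.univ.filter (fun i : Fin n => (i : ℕ) < m)).card = m := by
  rw [filter_lt_eq_map h, Finset.card_map, Finset.card_univ, Fintype.card_fin]

/-- Abel summation. -/
lemma abel_sum (c : ℕ → ℝ) (y : Fin n → ℝ) :
    ∑ i : Fin n, c (i : ℕ) * y i
      = (∑ k ∈ Finset.range n, (c k - c (k + 1)) * partSum n y (k + 1))
        + c n * partSum n y n := by
  have h1 : ∀ k, (c k - c (k + 1)) * partSum n y (k + 1)
      = ∑ i : Fin n, (if (i : ℕ) < k + 1 then (c k - c (k + 1)) * y i else 0) := by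
    intro k
    rw [show partSum n y (k + 1)
        = ∑ i ∈ Finset.univ.filter (fun i : Fin n => (i : ℕ) < k + 1), y i from rfl,
      Finset.mul_sum, Finset.sum_filter]
  rw [Finset.sum_congr rfl (fun k _ => h1 k), Finset.sum_comm]
  have h2 : ∀ i : Fin n,
      (∑ k ∈ Finset.range n, if (i : ℕ) < k + 1 then (c k - c (k + 1)) * y i else 0)
        = (c (i : ℕ) - c n) * y i := by
    intro i
    rw [← Finset.sum_filter]
    have hfil : (Finset.range n).filter (fun k => (i : ℕ) < k + 1)
        = Finset.Ico (i : ℕ) n := by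
      ext k
      simp [Nat.lt_succ_iff, Finset.mem_Ico, and_comm]
    rw [hfil, ← Finset.sum_mul]
    congr 1
    rw [Finset.sum_Ico_eq_sum_range]
    have := Finset.sum_range_sub' (f := fun k => c ((i : ℕ) + k)) (n := n - (i : ℕ))
    simp only [add_zero] at this
    rw [Nat.add_sub_cancel' (le_of_lt i.isLt)] at this
    simp only [← Nat.add_assoc] at this
    rw [this]
  rw [Finset.sum_congr rfl (fun i _ => h2 i), partSum_of_le y (le_refl n)]
  simp only [sub_mul, Finset.sum_sub_distrib, Finset.mul_sum]
  ring

lemma strictMono_fin_le {k : ℕ} (f : Fin k → Fin n) (hf : StrictMono f) (m : Fin k) :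
    (m : ℕ) ≤ (f m : ℕ) := by
  suffices h : ∀ N (m : Fin k), (m : ℕ) = N → N ≤ (f m : ℕ) from h _ m rfl
  intro N
  induction N with
  | zero => intro m _; exact Nat.zero_le _
  | succ N ih =>
    intro m hm
    have hNk : N < k := by have := m.isLt; omega
    have h1 : (⟨N, hNk⟩ : Fin k) < m := by
      rw [Fin.lt_def]; simp only; omega
    have h2 := ih ⟨N, hNk⟩ rfl
    have h3 := Fin.lt_def.mp (hf h1)
    omega

lemma antitone_sum_le_partSum (s : Fin n → ℝ) (hs : Antitone s) (B : Finset (Fin n)) :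
    ∑ i ∈ B, s i ≤ partSum n s B.card := by
  have hk : B.card ≤ n := by
    simpa using Finset.card_le_card (Finset.subset_univ B)
  set k := B.card with hkdef
  have f := B.orderIsoOfFin rfl
  have hmono : StrictMono (fun m : Fin k => ((f m : Fin n))) := by
    intro i j hij
    exact Subtype.coe_lt_coe.mpr (f.strictMono hij)
  have h1 : ∑ i ∈ B, s i = ∑ m : Fin k, s (f m) := by
    rw [← Finset.sum_coe_sort B]
    exact (Equiv.sum_comp f.toEquiv (fun b : B => s b)).symm
  rw [h1, partSum_eq_sum_fin s hk]
  apply Finset.sum_le_sum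
  intro m _
  apply hs
  show ((Fin.castLE hk m) : ℕ) ≤ ((f m : Fin n) : ℕ)
  simpa using strictMono_fin_le _ hmono m

lemma sum_subset_le_topSum (x : Fin n → ℝ) (A : Finset (Fin n)) :
    ∑ i ∈ A, x i ≤ topSum n x A.card := by
  set τ : Equiv.Perm (Fin n) := Fin.revPerm.trans (Tuple.sort x) with hτ
  have hx : ∀ j, x j = sortedDesc n x (τ.symm j) := by
    intro j
    rw [sortedDesc_eq_comp]
    simp [hτ, Fin.rev_rev]
  have h1 : ∑ i ∈ A, x i = ∑ j ∈ A.image τ.symm, sortedDesc n x j := by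
    rw [Finset.sum_image (fun a _ b _ h => τ.symm.injective h)]
    exact Finset.sum_congr rfl (fun i _ => hx i)
  rw [h1, topSum_eq_partSum,
    show A.card = (A.image τ.symm).card from
      (Finset.card_image_of_injective A τ.symm.injective).symm]
  exact antitone_sum_le_partSum _ (sortedDesc_antitone x) _

lemma topSum_full (x : Fin n → ℝ) : topSum n x n = ∑ i, x i := by
  rw [topSum_eq_partSum, partSum_of_le _ (le_refl n), sortedDesc_eq_comp]
  exact Equiv.sum_comp _ x

lemma topSum_zero (x : Fin n → ℝ) : topSum n x 0 = 0 := partSum_zero _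

lemma sortedDesc_eq_of_topSum_eq {u x : Fin n → ℝ}
    (h : ∀ k, k ≤ n → topSum n u k = topSum n x k) : sortedDesc n u = sortedDesc n x := by
  funext i
  have h1 := h ((i : ℕ) + 1) i.isLt
  have h2 := h (i : ℕ) (le_of_lt i.isLt)
  rw [topSum_eq_partSum, topSum_eq_partSum, partSum_succ _ i.isLt,
    partSum_succ _ i.isLt] at h1
  rw [topSum_eq_partSum, topSum_eq_partSum] at h2
  have : (⟨(i : ℕ), i.isLt⟩ : Fin n) = i := Fin.eta i i.isLt
  rw [this] at h1
  linarith

end Aux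

section Cone
variable {E F : Type*} [DecidableEq E] [NormedAddCommGroup F] [NormedSpace ℝ F]
  [FiniteDimensional ℝ F]

def coneSet (s : Finset E) (f : E → F) : Set F :=
  {z | ∃ μ : E → ℝ, (∀ v ∈ s, 0 ≤ μ v) ∧ z = ∑ v ∈ s, μ v • f v}

lemma coneSet_subset_indep (f : E → F) :
    ∀ (s : Finset E), ∀ z ∈ coneSet s f,
      ∃ t, t ⊆ s ∧ LinearIndependent ℝ (fun x : {x // x ∈ t} => f ↑x) ∧ z ∈ coneSet t f := by
  intro s
  induction s using Finset.strongInduction with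
  | _ s ih =>
    intro z hz
    by_cases hli : LinearIndependent ℝ (fun x : {x // x ∈ s} => f ↑x)
    · exact ⟨s, Finset.Subset.refl s, hli, hz⟩
    obtain ⟨μ, hμ0, hμz⟩ := hz
    obtain ⟨g, hgsum, i1, hgi1⟩ := Fintype.not_linearIndependent_iff.mp hli
    have hkey : ∃ c : E → ℝ, (∑ x ∈ s, c x • f x = 0) ∧ ∃ x1 ∈ s, 0 < c x1 := by
      set c : E → ℝ := fun x => if h : x ∈ s then g ⟨x, h⟩ else 0 with hc
      have hcrel : ∑ x ∈ s, c x • f x = 0 := by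
        rw [← Finset.sum_attach s (fun x => c x • f x)]
        rw [← hgsum, Finset.univ_eq_attach]
        apply Finset.sum_congr rfl
        intro x _
        simp [hc]
      have hcx1 : c (↑i1) ≠ 0 := by simpa [hc] using hgi1
      rcases lt_or_gt_of_ne hcx1 with hneg | hpos
      · refine ⟨-c, by simp [hcrel], ↑i1, i1.2, by simpa using hneg⟩
      · exact ⟨c, hcrel, ↑i1, i1.2, hpos⟩
    obtain ⟨c, hcrel, x1, hx1s, hx1pos⟩ := hkey
    set Sp := s.filter (fun x => 0 < c x) with hSp
    have hne : Sp.Nonempty := ⟨x1, Finset.mem_filter.mpr ⟨hx1s, hx1pos⟩⟩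
    obtain ⟨x0, hx0Sp, hmin⟩ := Finset.exists_min_image Sp (fun x => μ x / c x) hne
    have hx0s : x0 ∈ s := (Finset.mem_filter.mp hx0Sp).1
    have hcx0 : 0 < c x0 := (Finset.mem_filter.mp hx0Sp).2
    set θ := μ x0 / c x0 with hθ
    have hθ0 : 0 ≤ θ := div_nonneg (hμ0 x0 hx0s) (le_of_lt hcx0)
    set μ' : E → ℝ := fun x => μ x - θ * c x with hμ'
    have hμ'0 : ∀ x ∈ s, 0 ≤ μ' x := by
      intro x hx
      rcases le_or_gt (c x) 0 with hcx | hcx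
      · have : θ * c x ≤ 0 := mul_nonpos_of_nonneg_of_nonpos hθ0 hcx
        have := hμ0 x hx
        simp only [hμ']
        linarith
      · have hxSp : x ∈ Sp := Finset.mem_filter.mpr ⟨hx, hcx⟩
        have h1 : θ ≤ μ x / c x := hmin x hxSp
        have h2 : θ * c x ≤ μ x := (le_div_iff₀ hcx).mp h1
        simp only [hμ']
        linarith
    have hz' : z = ∑ x ∈ s, μ' x • f x := by
      have h1 : ∑ x ∈ s, μ' x • f x
          = (∑ x ∈ s, μ x • f x) - θ • ∑ x ∈ s, c x • f x := by
        rw [Finset.smul_sum, ← Finset.sum_sub_distrib]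
        apply Finset.sum_congr rfl
        intro x _
        rw [hμ']
        simp only
        rw [sub_smul, smul_smul]
      rw [h1, hcrel, smul_zero, sub_zero, hμz]
    have hμ'x0 : μ' x0 = 0 := by
      simp only [hμ', hθ]
      rw [div_mul_cancel₀ _ (ne_of_gt hcx0)]
      ring
    have hz'' : z ∈ coneSet (s.erase x0) f := by
      refine ⟨μ', fun x hx => hμ'0 x (Finset.mem_of_mem_erase hx), ?_⟩
      rw [hz']
      symm
      apply Finset.sum_erase
      rw [hμ'x0, zero_smul]
    obtain ⟨t, hts, hli', hzt⟩ := ih (s.erase x0) (Finset.erase_ssubset hx0s) z hz''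
    exact ⟨t, hts.trans (Finset.erase_subset _ _), hli', hzt⟩

lemma isClosed_coneSet_of_li (t : Finset E) (f : E → F)
    (hli : LinearIndependent ℝ (fun x : {x // x ∈ t} => f ↑x)) :
    IsClosed (coneSet t f) := by
  let L : ({x // x ∈ t} → ℝ) →ₗ[ℝ] F :=
    { toFun := fun μ => ∑ x : {x // x ∈ t}, μ x • f ↑x
      map_add' := fun μ ν => by
        simp [add_smul, Finset.sum_add_distrib]
      map_smul' := fun r μ => by
        simp [Finset.smul_sum, smul_smul] }
  have hker : LinearMap.ker L = ⊥ := by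
    rw [LinearMap.ker_eq_bot']
    intro μ hμ
    have hμ' : ∑ x : {x // x ∈ t}, μ x • f ↑x = 0 := hμ
    funext i
    exact Fintype.linearIndependent_iff.mp hli μ hμ' i
  have hemb := LinearMap.isClosedEmbedding_of_injective (𝕜 := ℝ) hker
  have himg : coneSet t f = L '' {μ | ∀ x, 0 ≤ μ x} := by
    ext z
    constructor
    · rintro ⟨μ, hμ0, rfl⟩
      refine ⟨fun x => μ ↑x, fun x => hμ0 ↑x x.2, ?_⟩
      show ∑ x : {x // x ∈ t}, μ ↑x • f ↑x = ∑ v ∈ t, μ v • f v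
      rw [Finset.univ_eq_attach]
      exact Finset.sum_attach t (fun v => μ v • f v)
    · rintro ⟨ν, hν0, rfl⟩
      refine ⟨fun x => if h : x ∈ t then ν ⟨x, h⟩ else 0,
        fun v hv => by simp only [dif_pos hv]; exact hν0 _, ?_⟩
      show (∑ x : {x // x ∈ t}, ν x • f ↑x)
          = ∑ v ∈ t, (if h : v ∈ t then ν ⟨v, h⟩ else 0) • f v
      rw [← Finset.sum_attach t (fun v => (if h : v ∈ t then ν ⟨v, h⟩ else 0) • f v),
        Finset.univ_eq_attach]
      apply Finset.sum_congr rfl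
      intro x _
      simp
  rw [himg]
  apply hemb.isClosedMap
  have : {μ : {x // x ∈ t} → ℝ | ∀ x, 0 ≤ μ x} = ⋂ x, {μ | 0 ≤ μ x} := by
    ext μ; simp [Set.mem_iInter]
  rw [this]
  exact isClosed_iInter fun x => isClosed_le continuous_const (continuous_apply x)

lemma isClosed_coneSet (s : Finset E) (f : E → F) : IsClosed (coneSet s f) := by
  have hunion : coneSet s f
      = ⋃ t ∈ {t : Finset E | t ⊆ s
          ∧ LinearIndependent ℝ (fun x : {x // x ∈ t} => f ↑x)}, coneSet t f := by
    ext z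
    simp only [Set.mem_iUnion, Set.mem_setOf_eq]
    constructor
    · intro hz
      obtain ⟨t, hts, hli, hzt⟩ := coneSet_subset_indep f s z hz
      exact ⟨t, ⟨hts, hli⟩, hzt⟩
    · rintro ⟨t, ⟨hts, -⟩, μ, hμ0, rfl⟩
      refine ⟨fun x => if x ∈ t then μ x else 0, fun v _ => ?_, ?_⟩
      · simp only
        split
        · exact hμ0 _ ‹_›
        · exact le_refl 0
      · rw [← Finset.sum_subset hts
          (fun x _ hx => by simp only [if_neg hx, zero_smul])]
        apply Finset.sum_congr rfl
        intro x hx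
        simp only [if_pos hx]
  rw [hunion]
  apply Set.Finite.isClosed_biUnion
  · apply Set.Finite.subset (s.powerset.finite_toSet)
    intro t ht
    simpa using ht.1
  · rintro t ⟨-, hli⟩
    exact isClosed_coneSet_of_li t f hli

lemma convex_coneSet (s : Finset E) (f : E → F) : Convex ℝ (coneSet s f) := by
  rintro z1 ⟨μ, hμ0, rfl⟩ z2 ⟨ν, hν0, rfl⟩ p q hp hq hpq
  refine ⟨fun x => p * μ x + q * ν x,
    fun v hv => add_nonneg (mul_nonneg hp (hμ0 v hv)) (mul_nonneg hq (hν0 v hv)), ?_⟩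
  rw [Finset.smul_sum, Finset.smul_sum, ← Finset.sum_add_distrib]
  apply Finset.sum_congr rfl
  intro x _
  simp [add_smul, smul_smul]

lemma smul_mem_coneSet (s : Finset E) (f : E → F) {z : F} (hz : z ∈ coneSet s f)
    {θ : ℝ} (hθ : 0 ≤ θ) : θ • z ∈ coneSet s f := by
  obtain ⟨μ, hμ0, rfl⟩ := hz
  refine ⟨fun x => θ * μ x, fun v hv => mul_nonneg hθ (hμ0 v hv), ?_⟩
  rw [Finset.smul_sum]
  apply Finset.sum_congr rfl
  intro x _
  rw [smul_smul]

lemma zero_mem_coneSet (s : Finset E) (f : E → F) : (0 : F) ∈ coneSet s f :=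
  ⟨fun _ => 0, fun _ _ => le_refl 0, by simp⟩

end Cone


theorem exists_majorizer_iff_no_strict_certificate (n : ℕ)
    (V : Finset (Fin n → ℝ)) (P : Set (Fin n → ℝ))
    (hP : P = convexHull ℝ (V : Set (Fin n → ℝ)))
    (hperm : ∀ x ∈ P, ∀ σ : Equiv.Perm (Fin n), x ∘ σ ∈ P)
    (x' : Fin n → ℝ) (hx' : x' ∈ P)
    (π : Equiv.Perm (Fin n)) (hsort : Antitone (fun i => x' (π i))) :
    (∃ u' ∈ P, Majorizes n u' x' ∧ sortedDesc n u' ≠ sortedDesc n x') ↔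
      ¬ ∃ a : Fin n → ℝ, StrictAnti (fun i => a (π i)) ∧
          ∀ x ∈ P, (∑ i, a i * (x i - x' i)) ≤ 0 := by
  classical
  rcases Nat.eq_zero_or_pos n with hn0 | hn
  · subst hn0
    refine iff_of_false ?_ (not_not_intro ⟨0, fun i => i.elim0, fun x _ => by simp⟩)
    rintro ⟨u', -, -, hne⟩
    exact hne (funext fun i => i.elim0)
  constructor
  · rintro ⟨u', hu'P, ⟨hmaj, hsum⟩, hne⟩
    rintro ⟨a, ha, hcert⟩
    have hle : ∀ k, k ≤ n → topSum n x' k ≤ topSum n u' k := by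
      intro k hk
      rcases lt_or_eq_of_le hk with hk | rfl
      · exact hmaj k hk
      · rw [topSum_full, topSum_full, hsum]
    obtain ⟨k0, hk0n, hk0⟩ : ∃ k0, k0 ≤ n ∧ topSum n x' k0 < topSum n u' k0 := by
      by_contra hno
      push_neg at hno
      exact hne (sortedDesc_eq_of_topSum_eq
        (fun k hk => le_antisymm (hno k hk) (hle k hk)))
    have hk01 : 1 ≤ k0 := by
      by_contra hk01
      push_neg at hk01
      interval_cases k0
      rw [topSum_zero, topSum_zero] at hk0
      exact lt_irrefl _ hk0
    have hk0n' : k0 < n := by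
      rcases lt_or_eq_of_le hk0n with h | rfl
      · exact h
      · rw [topSum_full, topSum_full, hsum] at hk0
        exact absurd hk0 (lt_irrefl _)
    set c : ℕ → ℝ := fun m => a (π ⟨min m (n - 1), by omega⟩) with hc
    have hcoe : ∀ i : Fin n, c (i : ℕ) = a (π i) := by
      intro i
      simp only [hc]
      congr 2
      exact Fin.ext (by simp; omega)
    set su := sortedDesc n u' with hsu
    set sx := sortedDesc n x' with hsx
    have hpsn : partSum n sx n = partSum n su n := by
      rw [hsu, hsx, ← topSum_eq_partSum, ← topSum_eq_partSum,
        topSum_full, topSum_full, hsum]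
    have hstrict : ∑ i, a (π i) * sx i < ∑ i, a (π i) * su i := by
      have e1 : ∑ i, a (π i) * sx i = ∑ i : Fin n, c (i : ℕ) * sx i :=
        Finset.sum_congr rfl (fun i _ => by rw [hcoe i])
      have e2 : ∑ i, a (π i) * su i = ∑ i : Fin n, c (i : ℕ) * su i :=
        Finset.sum_congr rfl (fun i _ => by rw [hcoe i])
      rw [e1, e2, abel_sum c sx, abel_sum c su, hpsn]
      apply add_lt_add_of_lt_of_le ?_ le_rfl
      apply Finset.sum_lt_sum
      · intro k hk
        apply mul_le_mul_of_nonneg_left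
        · rw [hsu, hsx, ← topSum_eq_partSum, ← topSum_eq_partSum]
          exact hle (k + 1) (Finset.mem_range.mp hk)
        · rw [sub_nonneg, hc]
          exact ha.antitone (by rw [Fin.le_def]; dsimp only; omega)
      · refine ⟨k0 - 1, Finset.mem_range.mpr (by omega), ?_⟩
        have hidx : k0 - 1 + 1 = k0 := by omega
        apply mul_lt_mul_of_pos_left
        · rw [hsu, hsx, ← topSum_eq_partSum, ← topSum_eq_partSum, hidx]
          exact hk0
        · rw [sub_pos, hc]
          apply ha
          rw [Fin.lt_def]
          dsimp only
          omega
    set σ : Equiv.Perm (Fin n) := π.symm.trans (Fin.revPerm.trans (Tuple.sort u')) with hσ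
    have hu'' : u' ∘ ⇑σ ∈ P := hperm u' hu'P σ
    have h1 : ∀ i, (u' ∘ ⇑σ) (π i) = su i := by
      intro i
      simp [hσ, hsu, sortedDesc]
    have h2 : ∑ i, a i * (u' ∘ ⇑σ) i = ∑ i, a (π i) * su i := by
      rw [← Equiv.sum_comp π (fun j => a j * (u' ∘ ⇑σ) j)]
      exact Finset.sum_congr rfl fun i _ => by rw [h1]
    have h3 : ∑ i, a i * x' i = ∑ i, a (π i) * sx i := by
      rw [← Equiv.sum_comp π (fun j => a j * x' j)]
      refine Finset.sum_congr rfl fun i _ => ?_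
      rw [hsx, congrFun (sortedDesc_of_antitone x' π hsort) i]
    have h4 := hcert (u' ∘ ⇑σ) hu''
    simp only [mul_sub, Finset.sum_sub_distrib] at h4
    rw [h2, h3] at h4
    linarith
  · intro hnc
    by_contra H
    apply hnc
    have hPconv : Convex ℝ P := hP ▸ convex_convexHull ℝ _
    have hVP : ∀ v ∈ V, v ∈ P := fun v hv => hP ▸ subset_convexHull ℝ _ hv
    set lastI : Fin n := ⟨n - 1, by omega⟩ with hlastI
    set A : (Fin n → ℝ) → (Fin n → ℝ) :=
      fun v k => topSum n v ((k : ℕ) + 1) - topSum n x' ((k : ℕ) + 1) with hA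
    set Δ : Set (Fin n → ℝ) :=
      {p | (∀ k, 0 ≤ p k) ∧ p lastI = 0 ∧ ∑ k, p k = 1} with hΔ
    have hΔconv : Convex ℝ Δ := by
      rintro p ⟨hp0, hpl, hps⟩ q ⟨hq0, hql, hqs⟩ α β hα hβ hαβ
      refine ⟨fun k => ?_, ?_, ?_⟩
      · show 0 ≤ α * p k + β * q k
        exact add_nonneg (mul_nonneg hα (hp0 k)) (mul_nonneg hβ (hq0 k))
      · show α * p lastI + β * q lastI = 0
        rw [hpl, hql]; ring
      · show ∑ k, (α * p k + β * q k) = 1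
        rw [Finset.sum_add_distrib, ← Finset.mul_sum, ← Finset.mul_sum, hps, hqs]
        simpa using hαβ
    have hΔcl : IsClosed Δ := by
      have h1 : IsClosed {p : Fin n → ℝ | ∀ k, 0 ≤ p k} := by
        have he : {p : Fin n → ℝ | ∀ k, 0 ≤ p k} = ⋂ k, {p | 0 ≤ p k} := by
          ext p; simp
        rw [he]
        exact isClosed_iInter fun k => isClosed_le continuous_const (continuous_apply k)
      have h2 : IsClosed {p : Fin n → ℝ | p lastI = 0} :=
        isClosed_eq (continuous_apply lastI) continuous_const
      have h3 : IsClosed {p : Fin n → ℝ | ∑ k, p k = 1} :=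
        isClosed_eq (continuous_finset_sum _ fun k _ => continuous_apply k) continuous_const
      have he : Δ = {p : Fin n → ℝ | ∀ k, 0 ≤ p k}
          ∩ ({p : Fin n → ℝ | p lastI = 0} ∩ {p : Fin n → ℝ | ∑ k, p k = 1}) := by
        ext p; simp only [hΔ, Set.mem_setOf_eq, Set.mem_inter_iff]
      rw [he]
      exact h1.inter (h2.inter h3)
    have hΔcomp : IsCompact Δ := by
      apply IsCompact.of_isClosed_subset
        (isCompact_univ_pi (fun _ : Fin n => isCompact_Icc (a := (0:ℝ)) (b := 1))) hΔcl
      rintro p ⟨h0, -, hsum⟩ k -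
      exact ⟨h0 k, by rw [← hsum]
                      exact Finset.single_le_sum (fun j _ => h0 j) (Finset.mem_univ k)⟩
    have hdisj : Disjoint Δ (coneSet V A) := by
      rw [Set.disjoint_left]
      rintro p ⟨hp0, hpl, hps⟩ ⟨μ, hμ0, hpsum⟩
      have hpk : ∀ k : Fin n, p k = ∑ v ∈ V, μ v * A v k := by
        intro k
        rw [hpsum, Finset.sum_apply]
        exact Finset.sum_congr rfl fun v _ => rfl
      obtain ⟨j, -, hj⟩ : ∃ j ∈ Finset.univ, (0:ℝ) < p j := by
        apply Finset.exists_lt_of_sum_lt (f := fun _ : Fin n => (0:ℝ))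
        rw [hps]
        simp
      have hM : 0 < ∑ v ∈ V, μ v := by
        rcases lt_or_eq_of_le (Finset.sum_nonneg hμ0) with h | h
        · exact h
        · exfalso
          have hall : ∀ v ∈ V, μ v = 0 :=
            (Finset.sum_eq_zero_iff_of_nonneg hμ0).mp h.symm
          rw [hpk j, Finset.sum_eq_zero (fun v hv => by rw [hall v hv, zero_mul])] at hj
          exact lt_irrefl _ hj
      set M := ∑ v ∈ V, μ v with hMdef
      set ν : (Fin n → ℝ) → ℝ := fun v => μ v / M with hν
      have hν0 : ∀ v ∈ V, 0 ≤ ν v := fun v hv => div_nonneg (hμ0 v hv) (le_of_lt hM)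
      have hν1 : ∑ v ∈ V, ν v = 1 := by
        rw [hν]
        rw [← Finset.sum_div]
        exact div_self (ne_of_gt hM)
      set w : (Fin n → ℝ) → (Fin n → ℝ) := fun v j => sortedDesc n v (π.symm j) with hw
      have hwP : ∀ v ∈ V, w v ∈ P := by
        intro v hv
        have heq : w v = v ∘ ⇑(π.symm.trans (Fin.revPerm.trans (Tuple.sort v))) := by
          funext j
          simp [hw, sortedDesc]
        rw [heq]
        exact hperm v (hVP v hv) _
      set ubar : Fin n → ℝ := fun j => ∑ v ∈ V, ν v * w v j with hubar
      have hubarP : ubar ∈ P := by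
        have hmem := hPconv.sum_mem (t := V) (fun v hv => hν0 v hv) hν1
          (fun v hv => hwP v hv)
        have he : ubar = ∑ v ∈ V, ν v • w v := by
          funext j
          rw [Finset.sum_apply]
          exact Finset.sum_congr rfl fun v _ => rfl
        rw [he]
        exact hmem
      have hubarpi : ∀ i, ubar (π i) = ∑ v ∈ V, ν v * sortedDesc n v i := by
        intro i
        simp [hubar, hw]
      have hubaranti : Antitone fun i => ubar (π i) := by
        intro i j hij
        show ubar (π j) ≤ ubar (π i)
        rw [hubarpi, hubarpi]
        exact Finset.sum_le_sum fun v hv =>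
          mul_le_mul_of_nonneg_left (sortedDesc_antitone v hij) (hν0 v hv)
      have hsortedubar : sortedDesc n ubar = fun i => ubar (π i) :=
        sortedDesc_of_antitone ubar π hubaranti
      have htop : ∀ m, topSum n ubar m = ∑ v ∈ V, ν v * topSum n v m := by
        intro m
        rw [topSum_eq_partSum, hsortedubar]
        unfold partSum
        rw [Finset.sum_congr rfl (fun i (_ : i ∈ Finset.univ.filter
          (fun i : Fin n => (i : ℕ) < m)) => hubarpi i), Finset.sum_comm]
        exact Finset.sum_congr rfl fun v _ => by
          rw [← Finset.mul_sum, topSum_eq_partSum]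
          rfl
      have hdiffk : ∀ k : Fin n,
          topSum n ubar ((k:ℕ)+1) - topSum n x' ((k:ℕ)+1) = p k / M := by
        intro k
        rw [htop]
        have hx'e : topSum n x' ((k:ℕ)+1) = ∑ v ∈ V, ν v * topSum n x' ((k:ℕ)+1) := by
          rw [← Finset.sum_mul, hν1, one_mul]
        rw [hx'e, ← Finset.sum_sub_distrib, hpk k, Finset.sum_div]
        refine Finset.sum_congr rfl fun v _ => ?_
        rw [hν, hA]
        dsimp only
        ring
      have hmaj : Majorizes n ubar x' := by
        constructor
        · intro k hk
          rcases Nat.eq_zero_or_pos k with rfl | hk1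
          · rw [topSum_zero, topSum_zero]
          · have hk' : k - 1 < n := by omega
            have hd := hdiffk ⟨k - 1, hk'⟩
            have hidx : ((⟨k - 1, hk'⟩ : Fin n) : ℕ) + 1 = k := by simp; omega
            rw [hidx] at hd
            have hpk0 : 0 ≤ p ⟨k - 1, hk'⟩ / M := div_nonneg (hp0 _) (le_of_lt hM)
            linarith
        · have hd := hdiffk lastI
          have hidx : ((lastI : Fin n) : ℕ) + 1 = n := by simp [hlastI]; omega
          rw [hidx, hpl, topSum_full, topSum_full] at hd
          simp only [zero_div] at hd
          linarith
      have hne : sortedDesc n ubar ≠ sortedDesc n x' := by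
        intro heq
        have hd := hdiffk j
        have heqt : topSum n ubar ((j:ℕ)+1) = topSum n x' ((j:ℕ)+1) := by
          rw [topSum_eq_partSum, topSum_eq_partSum, heq]
        rw [heqt] at hd
        have := div_pos hj hM
        linarith
      exact H ⟨ubar, hubarP, hmaj, hne⟩
    obtain ⟨f, u, v, hf1, huv, hf2⟩ :=
      geometric_hahn_banach_compact_closed hΔconv hΔcomp (convex_coneSet V A)
        (isClosed_coneSet V A) hdisj
    have hv0 : v < 0 := by
      have := hf2 0 (zero_mem_coneSet V A)
      simpa using this
    have hfC : ∀ z ∈ coneSet V A, 0 ≤ f z := by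
      intro z hz
      by_contra hneg
      push_neg at hneg
      have hθ0 : 0 ≤ (v - 1) / f z :=
        div_nonneg_of_nonpos (by linarith) (le_of_lt hneg)
      have h1 := hf2 _ (smul_mem_coneSet V A hz hθ0)
      rw [map_smul, smul_eq_mul, div_mul_cancel₀ _ (ne_of_lt hneg)] at h1
      linarith
    have hfΔ : ∀ p ∈ Δ, f p < 0 := fun p hp => lt_trans (hf1 p hp) (lt_trans huv hv0)
    set e : Fin n → (Fin n → ℝ) := fun k => fun j => if k = j then (1:ℝ) else 0 with he
    have hfrep : ∀ z : Fin n → ℝ, f z = ∑ k, z k * f (e k) := by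
      intro z
      conv_lhs => rw [pi_eq_sum_univ z]
      rw [map_sum]
      exact Finset.sum_congr rfl fun k _ => by rw [map_smul, smul_eq_mul]
    set gk : ℕ → ℝ := fun k => if h : k < n then -f (e ⟨k, h⟩) else 0 with hgk
    have hgkpos : ∀ k, k < n - 1 → 0 < gk k := by
      intro k hk
      have hkn : k < n := by omega
      have hmem : e ⟨k, hkn⟩ ∈ Δ := by
        refine ⟨fun j => ?_, ?_, ?_⟩
        · simp only [he]
          split <;> norm_num
        · simp only [he]
          rw [if_neg]
          intro hcon
          rw [Fin.ext_iff] at hcon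
          simp [hlastI] at hcon
          omega
        · simp [he]
      have := hfΔ _ hmem
      simp only [hgk]
      rw [dif_pos hkn]
      linarith
    have hconevert : ∀ vv ∈ V, A vv ∈ coneSet V A := by
      intro vv hvv
      refine ⟨fun x => if x = vv then 1 else 0, fun x _ => by dsimp only; split <;> norm_num, ?_⟩
      rw [Finset.sum_congr rfl (fun x (_ : x ∈ V) => by
        rw [ite_smul, one_smul, zero_smul] :
          ∀ x ∈ V, (if x = vv then (1:ℝ) else 0) • A x
            = if x = vv then A x else 0)]
      rw [Finset.sum_ite_eq' V vv A, if_pos hvv]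
    have hcert_vertex : ∀ vv ∈ V, ∑ k : Fin n, gk (k : ℕ) * A vv k ≤ 0 := by
      intro vv hvv
      have h0 := hfC _ (hconevert vv hvv)
      rw [hfrep (A vv)] at h0
      have he2 : ∑ k : Fin n, gk (k : ℕ) * A vv k
          = - ∑ k : Fin n, A vv k * f (e k) := by
        rw [← Finset.sum_neg_distrib]
        refine Finset.sum_congr rfl fun k _ => ?_
        simp only [hgk]
        rw [dif_pos k.isLt]
        have : (⟨(k : ℕ), k.isLt⟩ : Fin n) = k := Fin.eta k k.isLt
        rw [this]
        ring
      rw [he2]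
      linarith
    set c : ℕ → ℝ := fun m => gk (n - 1) + ∑ k ∈ Finset.Ico m (n - 1), gk k with hc
    set a : Fin n → ℝ := fun j => c ((π.symm j : Fin n) : ℕ) with ha
    have hacomp : ∀ i, a (π i) = c (i : ℕ) := by
      intro i
      simp [ha]
    have hck : ∀ k, k < n - 1 → c k - c (k + 1) = gk k := by
      intro k hk
      simp only [hc]
      have hsplit : ∑ kk ∈ Finset.Ico k (k+1), gk kk + ∑ kk ∈ Finset.Ico (k+1) (n-1), gk kk
          = ∑ kk ∈ Finset.Ico k (n-1), gk kk :=
        Finset.sum_Ico_consecutive _ (by omega) (by omega)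
      have hsing : ∑ kk ∈ Finset.Ico k (k+1), gk kk = gk k := by
        rw [Nat.Ico_succ_singleton, Finset.sum_singleton]
      linarith
    have hck0 : ∀ k, n - 1 ≤ k → c k = gk (n - 1) := by
      intro k hk
      simp [hc, Finset.Ico_eq_empty (by omega : ¬ k < n - 1)]
    have hcknonneg : ∀ k, 0 ≤ c k - c (k + 1) := by
      intro k
      rcases lt_or_ge k (n - 1) with hk | hk
      · rw [hck k hk]
        exact le_of_lt (hgkpos k hk)
      · rw [hck0 k hk, hck0 (k + 1) (by omega)]
        simp
    have hstrictanti : StrictAnti fun i => a (π i) := by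
      intro i j hij
      show a (π j) < a (π i)
      rw [hacomp, hacomp]
      have hijv : (i : ℕ) < (j : ℕ) := hij
      have hjn : (j : ℕ) ≤ n - 1 := by have := j.isLt; omega
      have hsplit : ∑ k ∈ Finset.Ico (i:ℕ) ((j:ℕ)), gk k
            + ∑ k ∈ Finset.Ico ((j:ℕ)) (n-1), gk k
          = ∑ k ∈ Finset.Ico (i:ℕ) (n-1), gk k :=
        Finset.sum_Ico_consecutive _ (by omega) hjn
      have hpos : 0 < ∑ k ∈ Finset.Ico (i:ℕ) ((j:ℕ)), gk k := by
        apply Finset.sum_pos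
        · intro k hk
          rw [Finset.mem_Ico] at hk
          exact hgkpos k (by omega)
        · exact Finset.nonempty_Ico.mpr hijv
      simp only [hc]
      linarith
    refine ⟨a, hstrictanti, ?_⟩
    set T : (Fin n → ℝ) → ℝ := fun y =>
      (∑ k ∈ Finset.range n, (c k - c (k+1)) * topSum n y (k+1)) + c n * topSum n y n
      with hT
    have hTsorted : ∀ y : Fin n → ℝ, ∑ i, a (π i) * sortedDesc n y i = T y := by
      intro y
      have habel := abel_sum (n := n) c (sortedDesc n y)
      simp only [← topSum_eq_partSum] at habel
      simp only [hT]
      rw [← habel]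
      exact Finset.sum_congr rfl fun i _ => by rw [hacomp]
    have hTle : ∀ y : Fin n → ℝ, ∑ i, a i * y i ≤ T y := by
      intro y
      have h1 : ∑ i, a i * y i = ∑ i : Fin n, c (i : ℕ) * y (π i) := by
        rw [← Equiv.sum_comp π (fun j => a j * y j)]
        exact Finset.sum_congr rfl fun i _ => by rw [hacomp]
      rw [h1, abel_sum c (fun i => y (π i))]
      simp only [hT]
      apply add_le_add
      · apply Finset.sum_le_sum
        intro k hk
        apply mul_le_mul_of_nonneg_left _ (hcknonneg k)
        have hk1 : k + 1 ≤ n := Finset.mem_range.mp hk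
        have himg : partSum n (fun i => y (π i)) (k+1)
            = ∑ i ∈ (Finset.univ.filter (fun i : Fin n => (i:ℕ) < k+1)).image π, y i := by
          rw [Finset.sum_image (fun a _ b _ h => π.injective h)]
          rfl
        have hcard := Finset.card_image_of_injective
          (Finset.univ.filter (fun i : Fin n => (i:ℕ) < k+1)) π.injective
        rw [card_filter_lt hk1] at hcard
        rw [himg]
        have := sum_subset_le_topSum y
          ((Finset.univ.filter (fun i : Fin n => (i:ℕ) < k+1)).image π)
        rw [hcard] at this
        exact this
      · apply le_of_eq
        congr 1
        rw [partSum_of_le _ (le_refl n), topSum_full]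
        exact Equiv.sum_comp π y
    have hTx' : ∑ i, a i * x' i = T x' := by
      have h1 : ∑ i, a i * x' i = ∑ i, a (π i) * sortedDesc n x' i := by
        rw [← Equiv.sum_comp π (fun j => a j * x' j)]
        refine Finset.sum_congr rfl fun i _ => ?_
        rw [congrFun (sortedDesc_of_antitone x' π hsort) i]
      rw [h1, hTsorted]
    have hTvertex : ∀ vv ∈ V, T vv ≤ T x' := by
      intro vv hvv
      obtain ⟨m, hm⟩ : ∃ m, n = m + 1 := ⟨n - 1, by omega⟩
      have hdiff : T vv - T x'
          = (∑ k ∈ Finset.range n,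
              (c k - c (k+1)) * (topSum n vv (k+1) - topSum n x' (k+1)))
            + c n * (topSum n vv n - topSum n x' n) := by
        simp only [hT]
        simp only [mul_sub]
        rw [Finset.sum_sub_distrib]
        ring
      have hrhs : ∑ k : Fin n, gk (k : ℕ) * A vv k
          = ∑ k ∈ Finset.range n, gk k * (topSum n vv (k+1) - topSum n x' (k+1)) := by
        rw [← Fin.sum_univ_eq_sum_range (fun k => gk k * (topSum n vv (k+1) - topSum n x' (k+1))) n]
      have hkey : T vv - T x' = ∑ k : Fin n, gk (k : ℕ) * A vv k := by
        rw [hdiff, hrhs]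
        subst hm
        rw [Finset.sum_range_succ, Finset.sum_range_succ]
        have hz1 : c m - c (m + 1) = 0 := by
          rw [hck0 m (by omega), hck0 (m+1) (by omega)]
          ring
        have hz2 : c (m + 1) = gk m := by
          rw [hck0 (m+1) (by omega)]
          norm_num
        rw [hz1, hz2]
        have hcong : ∑ k ∈ Finset.range m,
            (c k - c (k+1)) * (topSum (m+1) vv (k+1) - topSum (m+1) x' (k+1))
            = ∑ k ∈ Finset.range m,
              gk k * (topSum (m+1) vv (k+1) - topSum (m+1) x' (k+1)) := by
          refine Finset.sum_congr rfl fun k hk => ?_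
          rw [hck k (by simpa using Finset.mem_range.mp hk)]
        rw [hcong]
        ring
      have := hcert_vertex vv hvv
      linarith
    intro x hx
    rw [hP] at hx
    obtain ⟨wt, hwt0, hwt1, hwtx⟩ := Finset.mem_convexHull'.mp hx
    have hxi : ∀ i, x i = ∑ v ∈ V, wt v * v i := by
      intro i
      rw [← hwtx, Finset.sum_apply]
      exact Finset.sum_congr rfl fun v _ => rfl
    have h2 : ∑ i, a i * x i = ∑ v ∈ V, wt v * ∑ i, a i * v i := by
      calc ∑ i, a i * x i = ∑ i : Fin n, ∑ v ∈ V, a i * (wt v * v i) := by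
            refine Finset.sum_congr rfl fun i _ => ?_
            rw [hxi i, Finset.mul_sum]
        _ = ∑ v ∈ V, ∑ i : Fin n, a i * (wt v * v i) := Finset.sum_comm
        _ = ∑ v ∈ V, wt v * ∑ i, a i * v i := by
            refine Finset.sum_congr rfl fun v _ => ?_
            rw [Finset.mul_sum]
            exact Finset.sum_congr rfl fun i _ => by ring
    have h3 : ∑ i, a i * x i ≤ ∑ i, a i * x' i := by
      rw [h2, hTx']
      calc ∑ v ∈ V, wt v * ∑ i, a i * v i ≤ ∑ v ∈ V, wt v * T x' := by
            apply Finset.sum_le_sum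
            intro v hv
            exact mul_le_mul_of_nonneg_left
              (le_trans (hTle v) (hTvertex v hv)) (hwt0 v hv)
        _ = T x' := by rw [← Finset.sum_mul, hwt1, one_mul]
    simp only [mul_sub, Finset.sum_sub_distrib]
    linarith
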